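/- Let A be a total order on a finite candidate set C and let V be a strict weak order on C (a strict partial order whose incomparability relation is transitive). If V contains a u-valley with respect to A, then V contains a v-valley with respect to A. Consequently, a strict weak order V can be extended to a total order single-peaked with respect to A if and only if V contains no v-valley with respect to A. -/

import Mathlib

def VValley {C : Type*} (A V : C → C → Prop) : Prop :=
  ∃ c1 c2 c3 : C, A c1 c2 ∧ A c2 c3 ∧ V c1 c2 ∧ V c3 c2

def UValley {C : Type*} (A V : C → C → Prop) : Prop :=
  ∃ a b c d : C, a ≠ b ∧ a ≠ c ∧ a ≠ d ∧ b ≠ c ∧ b ≠ d ∧ c ≠ d ∧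
    A a b ∧ A b d ∧ A a c ∧ A c d ∧ V a b ∧ V d c

def Extends {C : Type*} (V T : C → C → Prop) : Prop :=
  ∀ x y, V x y → T x y

/-- `V` is a strict partial order: asymmetric and transitive. -/
def IsSPO {C : Type*} (V : C → C → Prop) : Prop :=
  (∀ x y, V x y → ¬ V y x) ∧ (∀ x y z, V x y → V y z → V x z)

/-- `V` is a strict weak order: a strict partial order with transitive incomparability. -/
def IsSWO {C : Type*} (V : C → C → Prop) : Prop :=
  IsSPO V ∧ ∀ x y z, (¬ V x y ∧ ¬ V y x) → (¬ V y z ∧ ¬ V z y) → (¬ V x z ∧ ¬ V z x)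

/-- `V` possibly single-peaked w.r.t. axis `A`: it extends to a total order with no v-valley. -/
def PossSP {C : Type*} (A V : C → C → Prop) : Prop :=
  ∃ T : C → C → Prop, IsStrictTotalOrder C T ∧ Extends V T ∧ ¬ VValley A T

section Aux

variable {C : Type*} {A V : C → C → Prop}

/-- Negative transitivity for strict weak orders. -/
lemma swo_negtrans (hV : IsSWO V) {x y z : C} (hxy : ¬ V x y) (hyz : ¬ V y z) : ¬ V x z := by
  intro hxz
  obtain ⟨⟨asym, htr⟩, hinc⟩ := hV
  by_cases hyx : V y x
  · exact hyz (htr _ _ _ hyx hxz)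
  by_cases hzy : V z y
  · exact hxy (htr _ _ _ hxz hzy)
  exact (hinc x y z ⟨hxy, hyx⟩ ⟨hyz, hzy⟩).1 hxz

lemma uv_to_vv (hA : IsStrictTotalOrder C A) (hV : IsSWO V) (h : UValley A V) :
    VValley A V := by
  obtain ⟨a, b, c, d, hab, hac, had, hbc, hbd, hcd, Aab, Abd, Aac, Acd, Vab, Vdc⟩ := h
  have asym := hV.1.1
  rcases trichotomous_of A b c with Abc | heq | Acb
  · by_cases Vdb : V d b
    · exact ⟨a, b, d, Aab, Abd, Vab, Vdb⟩
    by_cases Vac : V a c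
    · exact ⟨a, c, d, Aac, Acd, Vac, Vdc⟩
    by_cases Vcb : V c b
    · exact ⟨a, b, c, Aab, Abc, Vab, Vcb⟩
    exact absurd Vab (swo_negtrans hV Vac Vcb)
  · exact absurd heq hbc
  · by_cases Vac : V a c
    · exact ⟨a, c, d, Aac, Acd, Vac, Vdc⟩
    by_cases Vdb : V d b
    · exact ⟨a, b, d, Aab, Abd, Vab, Vdb⟩
    have Vcb : V c b := by
      by_contra h'; exact (swo_negtrans hV Vac h') Vab
    have Vbc : V b c := by
      by_contra h'; exact (swo_negtrans hV Vdb h') Vdc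
    exact absurd Vbc (asym _ _ Vcb)

/-- Key step: one of the two axis-endpoints of `S` is `V`-worst in `S`. -/
lemma key_step (hV : IsSWO V) (hNV : ¬ VValley A V) (S : Finset C) {m M : C}
    (hm : ∀ x ∈ S, x ≠ m → A m x) (hM : ∀ x ∈ S, x ≠ M → A x M) :
    (∀ z ∈ S, ¬ V m z) ∨ (∀ z ∈ S, ¬ V M z) := by
  by_contra hcon
  push_neg at hcon
  obtain ⟨⟨x, hxS, Vmx⟩, ⟨y, hyS, VMy⟩⟩ := hcon
  obtain ⟨⟨asym, htr⟩, hinc⟩ := hV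
  have hxm : x ≠ m := fun h => asym _ _ Vmx (h ▸ Vmx)
  have Amx : A m x := hm x hxS hxm
  have hyM : y ≠ M := fun h => asym _ _ VMy (h ▸ VMy)
  have AyM : A y M := hM y hyS hyM
  by_cases hxM : x = M
  · subst hxM
    have Vmy : V m y := htr _ _ _ Vmx VMy
    have hym : y ≠ m := fun h => asym _ _ Vmx (h ▸ VMy)
    have Amy : A m y := hm y hyS hym
    exact hNV ⟨m, y, x, Amy, AyM, Vmy, VMy⟩
  · have AxM : A x M := hM x hxS hxM
    have VMx : ¬ V M x := fun h => hNV ⟨m, x, M, Amx, AxM, Vmx, h⟩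
    have VmM : V m M := by
      by_contra h; exact (swo_negtrans ⟨⟨asym, htr⟩, hinc⟩ h VMx) Vmx
    have hym : y ≠ m := fun h => asym _ _ VmM (h ▸ VMy)
    have Amy : A m y := hm y hyS hym
    have Vmy : ¬ V m y := fun h => hNV ⟨m, y, M, Amy, AyM, h, VMy⟩
    have VMm : V M m := by
      by_contra h; exact (swo_negtrans ⟨⟨asym, htr⟩, hinc⟩ h Vmy) VMy
    exact asym _ _ VmM VMm

/-- Build a worst-to-best enumeration of a convex set `S`, consistent with `V`,
all of whose suffixes are convex. -/
lemma build [DecidableEq C] (hA : IsStrictTotalOrder C A) (hV : IsSWO V)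
    (hNV : ¬ VValley A V) :
    ∀ n (S : Finset C), S.card = n →
      (∀ x y z : C, x ∈ S → z ∈ S → A x y → A y z → y ∈ S) →
      ∃ l : List C, l.Nodup ∧ l.toFinset = S ∧
        List.Pairwise (fun x y => ¬ V x y) l ∧
        ∀ t, t <:+ l → ∀ x y z : C, x ∈ t → z ∈ t → A x y → A y z → y ∈ t := by
  intro n
  induction n using Nat.strong_induction_on with
  | _ n ih =>
    intro S hcard hconv
    rcases S.eq_empty_or_nonempty with rfl | hne
    · refine ⟨[], by simp, by simp, by simp, ?_⟩
      intro t ht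
      rw [List.suffix_nil] at ht
      subst ht
      simp
    haveI := hA
    haveI : DecidableRel A := Classical.decRel _
    letI : LinearOrder C := linearOrderOfSTO A
    have hAlt : ∀ x y : C, x < y → A x y := fun x y h => h
    set m := S.min' hne with hmdef
    set M := S.max' hne with hMdef
    have hmS : m ∈ S := S.min'_mem hne
    have hMS : M ∈ S := S.max'_mem hne
    have hm : ∀ x ∈ S, x ≠ m → A m x := fun x hx hxm =>
      hAlt _ _ (lt_of_le_of_ne (S.min'_le x hx) (Ne.symm hxm))
    have hM : ∀ x ∈ S, x ≠ M → A x M := fun x hx hxM =>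
      hAlt _ _ (lt_of_le_of_ne (S.le_max' x hx) hxM)
    have hkey := key_step hV hNV S hm hM
    -- choose the right endpoint w
    obtain ⟨w, hwS, hw, hconv'⟩ :
        ∃ w, w ∈ S ∧ (∀ z ∈ S, ¬ V w z) ∧
          (∀ x y z : C, x ∈ S.erase w → z ∈ S.erase w → A x y → A y z → y ∈ S.erase w) := by
      rcases hkey with h | h
      · refine ⟨m, hmS, h, ?_⟩
        intro x y z hx hz hxy hyz
        have hxS := Finset.mem_of_mem_erase hx
        have hzS := Finset.mem_of_mem_erase hz
        refine Finset.mem_erase.mpr ⟨?_, hconv x y z hxS hzS hxy hyz⟩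
        intro hym
        rw [hym] at hxy
        exact absurd (S.min'_le x hxS) (not_le.mpr (hxy : x < m))
      · refine ⟨M, hMS, h, ?_⟩
        intro x y z hx hz hxy hyz
        have hxS := Finset.mem_of_mem_erase hx
        have hzS := Finset.mem_of_mem_erase hz
        refine Finset.mem_erase.mpr ⟨?_, hconv x y z hxS hzS hxy hyz⟩
        intro hyM
        rw [hyM] at hyz
        exact absurd (S.le_max' z hzS) (not_le.mpr (hyz : M < z))
    have hpos : 0 < n := hcard ▸ Finset.card_pos.mpr hne
    have hcard' : (S.erase w).card = n - 1 := by
      rw [Finset.card_erase_of_mem hwS, hcard]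
    obtain ⟨l', hnd, htf, hpw, hsuf⟩ :=
      ih (n - 1) (by omega) (S.erase w) hcard' hconv'
    have hwl' : w ∉ l' := by
      intro h
      have : w ∈ S.erase w := htf ▸ List.mem_toFinset.mpr h
      exact (Finset.notMem_erase w S) this
    refine ⟨w :: l', List.nodup_cons.mpr ⟨hwl', hnd⟩, ?_, ?_, ?_⟩
    · simp [htf, Finset.insert_erase hwS]
    · refine List.pairwise_cons.mpr ⟨?_, hpw⟩
      intro z hz
      exact hw z (Finset.mem_of_mem_erase (htf ▸ List.mem_toFinset.mpr hz))
    · intro t ht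
      rcases List.suffix_cons_iff.mp ht with rfl | ht'
      · have hmem : ∀ u : C, u ∈ w :: l' ↔ u ∈ S := by
          intro u
          rw [← List.mem_toFinset]
          simp [htf, Finset.insert_erase hwS]
        intro x y z hx hz hxy hyz
        exact (hmem y).mpr (hconv x y z ((hmem x).mp hx) ((hmem z).mp hz) hxy hyz)
      · exact hsuf t ht'

end Aux

theorem stmt4 {C : Type*} [Fintype C] (A V : C → C → Prop)
    (hA : IsStrictTotalOrder C A) (hV : IsSWO V) :
    (UValley A V → VValley A V) ∧
    ((∃ T : C → C → Prop, IsStrictTotalOrder C T ∧ Extends V T ∧ ¬ VValley A T) ↔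
      ¬ VValley A V) := by
  classical
  refine ⟨uv_to_vv hA hV, ?_, ?_⟩
  · rintro ⟨T, hT, hext, hnv⟩ ⟨c1, c2, c3, h12, h23, v12, v32⟩
    exact hnv ⟨c1, c2, c3, h12, h23, hext _ _ v12, hext _ _ v32⟩
  · intro hNV
    obtain ⟨l, hnd, htf, hpw, hsuf⟩ :=
      build hA hV hNV (Finset.univ.card) Finset.univ rfl (by simp)
    have hmem : ∀ x : C, x ∈ l := by
      intro x
      rw [← List.mem_toFinset, htf]
      exact Finset.mem_univ x
    -- x is better than y iff y appears earlier (towards worst end)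
    set T : C → C → Prop := fun x y => l.idxOf y < l.idxOf x with hTdef
    have idxlt : ∀ x : C, l.idxOf x < l.length := fun x =>
      List.idxOf_lt_length_iff.mpr (hmem x)
    have hnotV : ∀ x y : C, l.idxOf x < l.idxOf y → ¬ V x y := by
      intro x y hlt
      have h := List.pairwise_iff_getElem.mp hpw _ _ (idxlt x) (idxlt y) hlt
      simpa [List.getElem_idxOf] using h
    have hasym := hV.1.1
    have hext : Extends V T := by
      intro x y hxy
      rcases lt_trichotomy (l.idxOf x) (l.idxOf y) with h | h | h
      · exact absurd hxy (hnotV x y h)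
      · have : x = y := (List.idxOf_inj (hmem x)).mp h
        exact absurd hxy (this ▸ fun h' => hasym _ _ h' h')
      · exact h
    have hSTO : IsStrictTotalOrder C T := by
      haveI h1 : IsTrichotomous C T := by
        constructor
        intro a b hab hba
        rcases lt_trichotomy (l.idxOf a) (l.idxOf b) with h | h | h
        · exact absurd h hba
        · exact (List.idxOf_inj (hmem a)).mp h
        · exact absurd h hab
      haveI h2 : IsIrrefl C T := ⟨fun a => lt_irrefl _⟩
      haveI h3 : IsTrans C T := ⟨fun a b c hab hbc => lt_trans hbc hab⟩
      haveI h4 : IsStrictOrder C T := ⟨⟩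
      exact ⟨⟩
    refine ⟨T, hSTO, hext, ?_⟩
    rintro ⟨c1, c2, c3, h12, h23, t12, t32⟩
    have t12' : l.idxOf c2 < l.idxOf c1 := t12
    have t32' : l.idxOf c2 < l.idxOf c3 := t32
    set k := l.idxOf c2 + 1 with hk
    have hsuffix : l.drop k <:+ l := List.drop_suffix k l
    have hmemdrop : ∀ x : C, k ≤ l.idxOf x → x ∈ l.drop k := by
      intro x hkx
      have hlen : l.idxOf x - k < (l.drop k).length := by
        have := idxlt x
        rw [List.length_drop]
        omega
      have hlt : k + (l.idxOf x - k) < l.length := by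
        have := idxlt x; omega
      have e1 : l[k + (l.idxOf x - k)]'hlt = (l.drop k)[l.idxOf x - k]'hlen :=
        List.getElem_drop' hlt
      have e2 : l[k + (l.idxOf x - k)]'hlt = l[l.idxOf x]'(idxlt x) := by
        congr 1
        omega
      have : (l.drop k)[l.idxOf x - k]'hlen = x := by
        rw [← e1, e2]
        exact List.getElem_idxOf (idxlt x)
      rw [← this]
      exact List.getElem_mem hlen
    have hc1 : c1 ∈ l.drop k := hmemdrop c1 (by omega)
    have hc3 : c3 ∈ l.drop k := hmemdrop c3 (by omega)
    have hc2 : c2 ∈ l.drop k := hsuf _ hsuffix c1 c2 c3 hc1 hc3 h12 h23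
    obtain ⟨j, hj, hjc⟩ := List.getElem_of_mem hc2
    simp only [List.getElem_drop] at hjc
    have : k + j = l.idxOf c2 := by
      have h2 : l[l.idxOf c2]'(idxlt c2) = c2 := List.getElem_idxOf (idxlt c2)
      exact (hnd.getElem_inj_iff).mp (by rw [hjc, h2])
    omega
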